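/- If f and g are u-deformed q-Appell sets with determining coefficient sequences (a_n) and (b_n) (a_0 ≠ 0, b_0 ≠ 0), i.e., f_n(x) = ∑_{k=0}^n [n choose k]_q u^{C(n-k,2)} a_k x^{n-k} and similarly for g, then the convolution product (f*g)_n(x) = ∑_{k=0}^n [n choose k]_q a_{n-k} g_k(x) is again a u-deformed q-Appell set, with determining coefficient sequence c_n = ∑_{k=0}^n [n choose k]_q a_k b_{n-k}. -/

import Mathlib

open Finset

def qNum {K : Type*} [Field K] (q : K) (n : ℕ) : K := ∑ i ∈ Finset.range n, q ^ i

def qFact {K : Type*} [Field K] (q : K) : ℕ → K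
  | 0 => 1
  | n + 1 => qFact q n * qNum q (n + 1)

def qBinom {K : Type*} [Field K] (q : K) (n k : ℕ) : K :=
  qFact q n / (qFact q k * qFact q (n - k))

lemma qFact_ne_zero {K : Type*} [Field K] (q : K)
    (hq : ∀ n : ℕ, 0 < n → qNum q n ≠ 0) : ∀ n, qFact q n ≠ 0
  | 0 => one_ne_zero
  | n + 1 => mul_ne_zero (qFact_ne_zero q hq n) (hq (n + 1) (Nat.succ_pos n))

lemma qBinom_tri {K : Type*} [Field K] (q : K)
    (hq : ∀ n : ℕ, 0 < n → qNum q n ≠ 0) {n k j : ℕ} (hk : k ≤ n) (hj : j ≤ k) :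
    qBinom q n k * qBinom q k j = qBinom q n (n - k + j) * qBinom q (n - k + j) (n - k) := by
  have F := qFact_ne_zero q hq
  have h2 : n - (n - k + j) = k - j := by omega
  have h3 : n - k + j - (n - k) = j := by omega
  unfold qBinom
  rw [h2, h3]
  field_simp [F]

/-- The convolution product of two u-deformed q-Appell sets is again a u-deformed
q-Appell set, with determining sequence the q-convolution of the two sequences. -/
theorem qAppell_convolution_closed {K : Type*} [Field K] (q u : K)
    (hq : ∀ n : ℕ, 0 < n → qNum q n ≠ 0)
    (a b : ℕ → K) (ha : a 0 ≠ 0) (hb : b 0 ≠ 0) :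
    (∑ k ∈ Finset.range 1, qBinom q 0 k * a k * b (0 - k)) ≠ 0 ∧
      ∀ (n : ℕ) (x : K),
        (∑ k ∈ Finset.range (n + 1), qBinom q n k * a (n - k) *
            (∑ j ∈ Finset.range (k + 1),
              qBinom q k j * u ^ ((k - j).choose 2) * b j * x ^ (k - j))) =
          ∑ k ∈ Finset.range (n + 1), qBinom q n k * u ^ ((n - k).choose 2) *
            (∑ j ∈ Finset.range (k + 1), qBinom q k j * a j * b (k - j)) * x ^ (n - k) := by
  constructor
  · simp only [Finset.sum_range_one, qBinom, qFact]
    norm_num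
    exact ⟨⟨qFact_ne_zero q hq 0, ha⟩, hb⟩
  · intro n x
    have LHS : (∑ k ∈ Finset.range (n + 1), qBinom q n k * a (n - k) *
            (∑ j ∈ Finset.range (k + 1),
              qBinom q k j * u ^ ((k - j).choose 2) * b j * x ^ (k - j))) =
        ∑ k ∈ Finset.range (n + 1), ∑ j ∈ Finset.range (k + 1),
          qBinom q n k * qBinom q k j * u ^ ((k - j).choose 2) * a (n - k) * b j * x ^ (k - j) := by
      refine Finset.sum_congr rfl fun k _ => ?_
      rw [Finset.mul_sum]
      exact Finset.sum_congr rfl fun j _ => by ring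
    have RHS : (∑ k ∈ Finset.range (n + 1), qBinom q n k * u ^ ((n - k).choose 2) *
            (∑ j ∈ Finset.range (k + 1), qBinom q k j * a j * b (k - j)) * x ^ (n - k)) =
        ∑ k ∈ Finset.range (n + 1), ∑ j ∈ Finset.range (k + 1),
          qBinom q n k * qBinom q k j * u ^ ((n - k).choose 2) * a j * b (k - j) * x ^ (n - k) := by
      refine Finset.sum_congr rfl fun k _ => ?_
      rw [Finset.mul_sum, Finset.sum_mul]
      exact Finset.sum_congr rfl fun j _ => by ring
    rw [LHS, RHS]
    rw [Finset.sum_sigma', Finset.sum_sigma']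
    refine Finset.sum_nbij' (fun p => ⟨n - p.1 + p.2, n - p.1⟩)
      (fun p => ⟨n - p.2, p.1 - p.2⟩) ?_ ?_ ?_ ?_ ?_
    · rintro ⟨k, j⟩ hp
      simp only [Finset.mem_sigma, Finset.mem_range] at hp ⊢
      omega
    · rintro ⟨k, j⟩ hp
      simp only [Finset.mem_sigma, Finset.mem_range] at hp ⊢
      omega
    · rintro ⟨k, j⟩ hp
      simp only [Finset.mem_sigma, Finset.mem_range] at hp
      simp only [Sigma.mk.inj_iff]
      constructor <;> [skip; apply heq_of_eq] <;> omega
    · rintro ⟨k, j⟩ hp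
      simp only [Finset.mem_sigma, Finset.mem_range] at hp
      simp only [Sigma.mk.inj_iff]
      constructor <;> [skip; apply heq_of_eq] <;> omega
    · rintro ⟨k, j⟩ hp
      simp only [Finset.mem_sigma, Finset.mem_range] at hp
      obtain ⟨hk, hj⟩ := hp
      have hk' : k ≤ n := by omega
      have hj' : j ≤ k := by omega
      have e1 : n - (n - k + j) = k - j := by omega
      have e2 : n - k + j - (n - k) = j := by omega
      simp only [e1, e2]
      rw [qBinom_tri q hq hk' hj']
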